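/- The norm ‖a‖ = ‖a‖_∞ + ‖a‖_ω on the algebra B₀ is submultiplicative: ‖ab‖ ≤ ‖a‖·‖b‖ for all a, b ∈ B₀; moreover ‖a*‖ = ‖a‖ and ‖1‖ = 1. -/

import Mathlib

open Filter Topology

/-- `B₀` membership: the sequence converges and `n (a n - λ(a))` converges. -/
def MemB0 (a : ℕ → ℂ) (la : ℂ) : Prop :=
  Tendsto a atTop (𝓝 la) ∧ ∃ w, Tendsto (fun n : ℕ => (n : ℂ) * (a n - la)) atTop (𝓝 w)

/-- The norm `‖a‖ = ‖a‖_∞ + ‖a‖_ω` on `B₀`, where `la = λ(a)`. -/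
noncomputable def nrm (a : ℕ → ℂ) (la : ℂ) : ℝ :=
  (⨆ n : ℕ, ‖a n‖) + ⨆ n : ℕ, (n : ℝ) * ‖a n - la‖

lemma bddA {a : ℕ → ℂ} {la : ℂ} (h : MemB0 a la) :
    BddAbove (Set.range fun n => ‖a n‖) :=
  ((continuous_norm.tendsto la).comp h.1).bddAbove_range

lemma bddW {a : ℕ → ℂ} {la : ℂ} (h : MemB0 a la) :
    BddAbove (Set.range fun n : ℕ => (n : ℝ) * ‖a n - la‖) := by
  obtain ⟨w, hw⟩ := h.2
  have ht : Tendsto (fun n : ℕ => (n : ℝ) * ‖a n - la‖) atTop (𝓝 (‖w‖)) := by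
    have := (continuous_norm.tendsto w).comp hw
    simpa [Function.comp_def, norm_mul, Complex.norm_natCast] using this
  exact ht.bddAbove_range

/-- `‖·‖` is submultiplicative on `B₀`, `‖a*‖ = ‖a‖`, and `‖1‖ = 1`. -/
theorem nrm_submult_star_one :
    (∀ (a b : ℕ → ℂ) (la lb : ℂ), MemB0 a la → MemB0 b lb →
      nrm (fun n => a n * b n) (la * lb) ≤ nrm a la * nrm b lb) ∧
    (∀ (a : ℕ → ℂ) (la : ℂ), MemB0 a la →
      nrm (fun n => starRingEnd ℂ (a n)) (starRingEnd ℂ la) = nrm a la) ∧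
    nrm (fun _ => 1) 1 = 1 := by
  refine ⟨?_, ?_, ?_⟩
  · intro a b la lb ha hb
    set Sa := ⨆ n : ℕ, ‖a n‖ with hSa
    set Wa := ⨆ n : ℕ, (n : ℝ) * ‖a n - la‖ with hWa
    set Sb := ⨆ n : ℕ, ‖b n‖ with hSb
    set Wb := ⨆ n : ℕ, (n : ℝ) * ‖b n - lb‖ with hWb
    have haS : ∀ n, ‖a n‖ ≤ Sa := fun n => le_ciSup (bddA ha) n
    have hbS : ∀ n, ‖b n‖ ≤ Sb := fun n => le_ciSup (bddA hb) n
    have haW : ∀ n : ℕ, (n : ℝ) * ‖a n - la‖ ≤ Wa := fun n => le_ciSup (bddW ha) n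
    have hbW : ∀ n : ℕ, (n : ℝ) * ‖b n - lb‖ ≤ Wb := fun n => le_ciSup (bddW hb) n
    have hSa0 : 0 ≤ Sa := le_trans (norm_nonneg (a 0)) (haS 0)
    have hSb0 : 0 ≤ Sb := le_trans (norm_nonneg (b 0)) (hbS 0)
    have hWa0 : 0 ≤ Wa := by simpa using haW 0
    have hWb0 : 0 ≤ Wb := by simpa using hbW 0
    have hlb : ‖lb‖ ≤ Sb :=
      le_of_tendsto ((continuous_norm.tendsto lb).comp hb.1)
        (Filter.Eventually.of_forall hbS)
    have h1 : (⨆ n : ℕ, ‖a n * b n‖) ≤ Sa * Sb := by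
      refine ciSup_le fun n => ?_
      rw [norm_mul]
      exact mul_le_mul (haS n) (hbS n) (norm_nonneg _) hSa0
    have h2 : (⨆ n : ℕ, (n : ℝ) * ‖a n * b n - la * lb‖) ≤ Sa * Wb + Wa * Sb := by
      refine ciSup_le fun n => ?_
      have key : ‖a n * b n - la * lb‖ ≤
          ‖a n‖ * ‖b n - lb‖ + ‖a n - la‖ * ‖lb‖ := by
        have : a n * b n - la * lb = a n * (b n - lb) + (a n - la) * lb := by ring
        rw [this]
        calc ‖a n * (b n - lb) + (a n - la) * lb‖
            ≤ ‖a n * (b n - lb)‖ + ‖(a n - la) * lb‖ :=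
              norm_add_le _ _
          _ = _ := by rw [norm_mul, norm_mul]
      calc (n : ℝ) * ‖a n * b n - la * lb‖
          ≤ (n : ℝ) * (‖a n‖ * ‖b n - lb‖
              + ‖a n - la‖ * ‖lb‖) := by
            exact mul_le_mul_of_nonneg_left key (Nat.cast_nonneg n)
        _ = ‖a n‖ * ((n : ℝ) * ‖b n - lb‖)
              + ((n : ℝ) * ‖a n - la‖) * ‖lb‖ := by ring
        _ ≤ Sa * Wb + Wa * Sb :=
            add_le_add (mul_le_mul (haS n) (hbW n) (by positivity) hSa0)
              (mul_le_mul (haW n) hlb (norm_nonneg _) hWa0)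
    have : nrm (fun n => a n * b n) (la * lb) ≤ Sa * Sb + (Sa * Wb + Wa * Sb) := by
      unfold nrm
      exact add_le_add h1 h2
    refine this.trans ?_
    unfold nrm
    nlinarith [mul_nonneg hWa0 hWb0]
  · intro a la _
    unfold nrm
    have h1 : ∀ n : ℕ, ‖(starRingEnd ℂ) (a n)‖ = ‖a n‖ :=
      fun n => Complex.norm_conj _
    have h2 : ∀ n : ℕ, ‖(starRingEnd ℂ) (a n) - (starRingEnd ℂ) la‖
        = ‖a n - la‖ := fun n => by rw [← map_sub, Complex.norm_conj]
    simp_rw [h1, h2]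
  · simp [nrm, ciSup_const]
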